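/- Let δ be a derivation of a field F with constant subfield K, and let c_1, …, c_n ∈ F. Then {c_1, …, c_n} is linearly independent over K if and only if the Wronskian matrix W_n(c_1,…,c_n), whose (i,j) entry is δ^{i-1}(c_j) for 1 ≤ i,j ≤ n, is invertible. -/

import Mathlib

open scoped BigOperators

section Aux

variable {F : Type*} [Field F] (δ : F → F)

lemma wc_dzero (hadd : ∀ a b : F, δ (a + b) = δ a + δ b) : δ 0 = 0 := by
  have h := hadd 0 0
  rw [add_zero] at h
  exact (right_eq_add.mp h)

lemma wc_done (hmul : ∀ a b : F, δ (a * b) = a * δ b + δ a * b) : δ 1 = 0 := by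
  have h := hmul 1 1
  rw [mul_one, one_mul, mul_one] at h
  exact (right_eq_add.mp h)

lemma wc_dsum (hadd : ∀ a b : F, δ (a + b) = δ a + δ b)
    {ι : Type*} (s : Finset ι) (f : ι → F) :
    δ (∑ i ∈ s, f i) = ∑ i ∈ s, δ (f i) := by
  classical
  induction s using Finset.induction with
  | empty => simpa using wc_dzero δ hadd
  | insert a s h ih => rw [Finset.sum_insert h, Finset.sum_insert h, hadd, ih]

lemma wc_aux (hadd : ∀ a b : F, δ (a + b) = δ a + δ b)
    (hmul : ∀ a b : F, δ (a * b) = a * δ b + δ a * b) :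
    ∀ (n : ℕ) (c : Fin n → F),
      (Matrix.of fun i j : Fin n => δ^[(i : ℕ)] (c j)).det = 0 →
      ∃ a : Fin n → F, (∀ i, δ (a i) = 0) ∧ (∑ i, a i * c i = 0) ∧ ∃ i, a i ≠ 0 := by
  intro n
  induction n with
  | zero =>
    intro c h
    simp [Matrix.det_fin_zero] at h
  | succ n ih =>
    intro c hdet
    set c' : Fin n → F := fun j => c j.castSucc with hc'
    by_cases h' : (Matrix.of fun i j : Fin n => δ^[(i : ℕ)] (c' j)).det = 0
    · -- use induction hypothesis and extend by zero
      obtain ⟨a, ha0, hasum, i0, hi0⟩ := ih c' h'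
      refine ⟨Fin.snoc a 0, ?_, ?_, ⟨i0.castSucc, by simpa using hi0⟩⟩
      · intro i
        induction i using Fin.lastCases with
        | last => simpa using wc_dzero δ hadd
        | cast i => simpa using ha0 i
      · rw [Fin.sum_univ_castSucc]
        simpa using hasum
    · -- the small Wronskian is invertible
      obtain ⟨v, hv0, hv⟩ := (Matrix.exists_mulVec_eq_zero_iff).mpr hdet
      have hvlast : v (Fin.last n) ≠ 0 := by
        intro hlast
        apply h'
        rw [← Matrix.exists_mulVec_eq_zero_iff]
        refine ⟨fun j => v j.castSucc, ?_, ?_⟩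
        · intro hz
          apply hv0
          funext i
          induction i using Fin.lastCases with
          | last => exact hlast
          | cast i => exact congrFun hz i
        · funext i
          have := congrFun hv i.castSucc
          simp only [Matrix.mulVec, dotProduct, Matrix.of_apply, Pi.zero_apply] at this ⊢
          rw [Fin.sum_univ_castSucc, hlast, mul_zero, add_zero] at this
          simpa [hc'] using this
      set b : Fin (n + 1) → F := fun j => v j / v (Fin.last n) with hb
      have hblast : b (Fin.last n) = 1 := div_self hvlast
      -- the key equations
      have E : ∀ i : Fin (n + 1), ∑ j, δ^[(i : ℕ)] (c j) * b j = 0 := by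
        intro i
        have := congrFun hv i
        simp only [Matrix.mulVec, dotProduct, Matrix.of_apply, Pi.zero_apply] at this
        have : (∑ j, δ^[(i : ℕ)] (c j) * v j) / v (Fin.last n) = 0 := by
          rw [this, zero_div]
        rw [Finset.sum_div] at this
        simpa [hb, mul_div_assoc] using this
      -- differentiated equations
      have D : ∀ i : Fin n, ∑ j, δ^[(i : ℕ)] (c j) * δ (b j) = 0 := by
        intro i
        have h1 : δ (∑ j, δ^[(i : ℕ)] (c j) * b j) = 0 := by
          have hE := E i.castSucc
          simp only [Fin.coe_castSucc] at hE
          rw [hE, wc_dzero δ hadd]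
        rw [wc_dsum δ hadd] at h1
        have h2 : ∀ j, δ (δ^[(i : ℕ)] (c j) * b j)
            = δ^[(i : ℕ)] (c j) * δ (b j) + δ^[((i : ℕ) + 1)] (c j) * b j := by
          intro j
          rw [hmul]
          congr 1
          rw [Function.iterate_succ_apply' δ (i : ℕ) (c j), mul_comm]
        rw [Finset.sum_congr rfl fun j _ => h2 j, Finset.sum_add_distrib] at h1
        have h3 : ∑ j, δ^[((i : ℕ) + 1)] (c j) * b j = 0 := by
          have := E i.succ
          simpa using this
        rw [h3, add_zero] at h1
        exact h1
      -- δ (b j) = 0 for all j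
      have hconst : ∀ j, δ (b j) = 0 := by
        have hsmall : ∀ j : Fin n, δ (b j.castSucc) = 0 := by
          by_contra hex
          push_neg at hex
          obtain ⟨j0, hj0⟩ := hex
          apply h'
          rw [← Matrix.exists_mulVec_eq_zero_iff]
          refine ⟨fun j => δ (b j.castSucc), ?_, ?_⟩
          · intro hz
            exact hj0 (congrFun hz j0)
          · funext i
            have := D i
            rw [Fin.sum_univ_castSucc, hblast, wc_done δ hmul, mul_zero, add_zero] at this
            simp only [Matrix.mulVec, dotProduct, Matrix.of_apply, Pi.zero_apply]
            simpa [hc'] using this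
        intro j
        induction j using Fin.lastCases with
        | last => rw [hblast]; exact wc_done δ hmul
        | cast j => exact hsmall j
      refine ⟨b, hconst, ?_, ⟨Fin.last n, by rw [hblast]; exact one_ne_zero⟩⟩
      have := E 0
      simp only [Fin.val_zero, Function.iterate_zero, id_eq] at this
      calc ∑ i, b i * c i = ∑ i, c i * b i := by
            exact Finset.sum_congr rfl fun i _ => mul_comm _ _
        _ = 0 := this

end Aux

/-- Wronskian criterion: elements `c_1, …, c_n` of a field `F` with derivation `δ`
are linearly independent over the constant subfield `K = {a : δ a = 0}` if and only if
the Wronskian matrix `(δ^{i-1}(c_j))` is invertible. -/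
theorem wronskian_criterion (F : Type*) [Field F]
    (δ : F → F)
    (hadd : ∀ a b : F, δ (a + b) = δ a + δ b)
    (hmul : ∀ a b : F, δ (a * b) = a * δ b + δ a * b)
    (n : ℕ) (c : Fin n → F) :
    (∀ a : Fin n → F, (∀ i, δ (a i) = 0) → ∑ i, a i * c i = 0 → ∀ i, a i = 0)
      ↔ IsUnit (Matrix.of fun i j : Fin n => δ^[(i : ℕ)] (c j)).det := by
  constructor
  · intro hli
    rw [isUnit_iff_ne_zero]
    intro hdet
    obtain ⟨a, ha0, hasum, i0, hi0⟩ := wc_aux δ hadd hmul n c hdet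
    exact hi0 (hli a ha0 hasum i0)
  · intro hdet a ha0 hasum
    -- all iterated derivative relations hold
    have key : ∀ k : ℕ, ∑ i, a i * δ^[k] (c i) = 0 := by
      intro k
      induction k with
      | zero => simpa using hasum
      | succ k ih =>
        have h1 : δ (∑ i, a i * δ^[k] (c i)) = 0 := by rw [ih, wc_dzero δ hadd]
        rw [wc_dsum δ hadd] at h1
        have h2 : ∀ i : Fin n, δ (a i * δ^[k] (c i)) = a i * δ^[k + 1] (c i) := by
          intro i
          rw [hmul, ha0, zero_mul, add_zero, Function.iterate_succ_apply' δ k (c i)]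
        rw [Finset.sum_congr rfl fun i _ => h2 i] at h1
        exact h1
    have hmv : (Matrix.of fun i j : Fin n => δ^[(i : ℕ)] (c j)).mulVec a = 0 := by
      funext i
      simp only [Matrix.mulVec, dotProduct, Matrix.of_apply, Pi.zero_apply]
      calc ∑ j, δ^[(i : ℕ)] (c j) * a j = ∑ j, a j * δ^[(i : ℕ)] (c j) :=
            Finset.sum_congr rfl fun j _ => mul_comm _ _
        _ = 0 := key i
    have hinj : Function.Injective
        (Matrix.of fun i j : Fin n => δ^[(i : ℕ)] (c j)).mulVec :=
      Matrix.mulVec_injective_iff_isUnit.mpr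
        ((Matrix.isUnit_iff_isUnit_det _).mpr hdet)
    have : a = 0 := by
      apply hinj
      rw [hmv, Matrix.mulVec_zero]
    intro i
    rw [this]
    rfl
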